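/- arXiv:2211.13646 — 2 statements merged into one kernel-verified Lean document; each statement's English description precedes it below -/
import Mathlib

section
/- Given two codimension-1 subspaces σ, τ of ℝⁿ with unit normals v_σ, v_τ, there exists a rotation O ∈ SO(n) such that O σ = τ, O v_σ = v_τ, and the operator norm ‖O − Id‖ equals |v_σ − v_τ|. -/
open Submodule Module RealInnerProductSpace

variable {F : Type*} [NormedAddCommGroup F] [InnerProductSpace ℝ F] [FiniteDimensional ℝ F]

omit [FiniteDimensional ℝ F] in
lemma refl_formula (w x : F) : reflection (ℝ ∙ w)ᗮ x = x - (2 * ⟪w, x⟫ / ‖w‖^2) • w := by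
  rw [reflection_orthogonal_apply, reflection_singleton_apply]
  simp only [RCLike.ofReal_real_eq_id, id_eq]
  module

noncomputable def rot (v w : F) : F ≃ₗᵢ[ℝ] F :=
  (reflection (ℝ ∙ v)ᗮ).trans (reflection (ℝ ∙ w)ᗮ)

omit [FiniteDimensional ℝ F] in
lemma rot_apply (v w x : F) (hv : ‖v‖ = 1) :
    rot v w x = x - (2 * ⟪v, x⟫) • v - ((2 * ⟪w, x⟫ - 4 * ⟪v, x⟫ * ⟪v, w⟫) / ‖w‖^2) • w := by
  have hvv : (‖v‖:ℝ)^2 = 1 := by rw [hv]; norm_num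
  show reflection (ℝ ∙ w)ᗮ (reflection (ℝ ∙ v)ᗮ x) = _
  rw [refl_formula, refl_formula, hvv]
  rw [inner_sub_right, inner_smul_right, real_inner_comm w v]
  match_scalars <;> ring

omit [FiniteDimensional ℝ F] in
lemma rot_sub_self (v w x : F) (hv : ‖v‖ = 1) :
    rot v w x - x = (-(2 * ⟪v, x⟫)) • v + (-((2 * ⟪w, x⟫ - 4 * ⟪v, x⟫ * ⟪v, w⟫) / ‖w‖^2)) • w := by
  rw [rot_apply v w x hv]; module

omit [FiniteDimensional ℝ F] in
lemma norm_smul_add_smul_sq (p q : ℝ) (v w : F) :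
    ‖p • v + q • w‖^2 = p^2 * ‖v‖^2 + 2 * (p * q * ⟪v, w⟫) + q^2 * ‖w‖^2 := by
  rw [norm_add_sq_real, norm_smul, norm_smul, real_inner_smul_left, real_inner_smul_right]
  simp [mul_pow, sq_abs]
  ring

omit [FiniteDimensional ℝ F] in
lemma norm_rot_sub_sq (v w x : F) (hv : ‖v‖ = 1) (hw : w ≠ 0) :
    ‖rot v w x - x‖^2 = 4 * (⟪v,x⟫^2 * ‖w‖^2 + ⟪w,x⟫^2 - 2 * ⟪v,x⟫ * ⟪w,x⟫ * ⟪v,w⟫) / ‖w‖^2 := by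
  have hW : (‖w‖:ℝ)^2 ≠ 0 := pow_ne_zero _ (norm_ne_zero_iff.mpr hw)
  rw [rot_sub_self v w x hv, norm_smul_add_smul_sq, hv]
  field_simp
  ring

omit [FiniteDimensional ℝ F] in
lemma norm_triple_sq (p q r : ℝ) (x v w : F) :
    ‖p • x + q • v + r • w‖^2 = p^2 * ‖x‖^2 + q^2 * ‖v‖^2 + r^2 * ‖w‖^2
      + 2 * (p * q * ⟪x,v⟫) + 2 * (p * r * ⟪x,w⟫) + 2 * (q * r * ⟪v,w⟫) := by
  rw [norm_add_sq_real, norm_smul_add_smul_sq, norm_smul, inner_add_left,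
    real_inner_smul_left, real_inner_smul_left, real_inner_smul_right, real_inner_smul_right]
  simp [mul_pow, sq_abs]
  ring


omit [FiniteDimensional ℝ F] in
lemma gram_ineq (v w x : F) (hv : ‖v‖ = 1) (hD : ⟪v,w⟫^2 < ‖w‖^2) :
    ⟪v,x⟫^2 * ‖w‖^2 + ⟪w,x⟫^2 - 2 * ⟪v,x⟫ * ⟪w,x⟫ * ⟪v,w⟫
      ≤ (‖w‖^2 - ⟪v,w⟫^2) * ‖x‖^2 := by
  have hDpos : (0:ℝ) < ‖w‖^2 - ⟪v,w⟫^2 := by linarith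
  have hy : ‖(‖w‖^2 - ⟪v,w⟫^2) • x + (-(⟪v,x⟫ * ‖w‖^2 - ⟪w,x⟫ * ⟪v,w⟫)) • v
        + (-(⟪w,x⟫ - ⟪v,x⟫ * ⟪v,w⟫)) • w‖^2
      = (‖w‖^2 - ⟪v,w⟫^2) * ((‖w‖^2 - ⟪v,w⟫^2) * ‖x‖^2
        - (⟪v,x⟫^2 * ‖w‖^2 + ⟪w,x⟫^2 - 2 * ⟪v,x⟫ * ⟪w,x⟫ * ⟪v,w⟫)) := by
    rw [norm_triple_sq, hv, real_inner_comm v x, real_inner_comm w x]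
    ring
  have h0 : (0:ℝ) ≤ (‖w‖^2 - ⟪v,w⟫^2) * ((‖w‖^2 - ⟪v,w⟫^2) * ‖x‖^2
      - (⟪v,x⟫^2 * ‖w‖^2 + ⟪w,x⟫^2 - 2 * ⟪v,x⟫ * ⟪w,x⟫ * ⟪v,w⟫)) := by
    rw [← hy]; positivity
  nlinarith [h0, hDpos]

lemma key_norm (v w : F) (hv : ‖v‖ = 1) (hD : ⟪v,w⟫^2 < ‖w‖^2) :
    ‖((rot v w).toLinearIsometry.toContinuousLinearMap : F →L[ℝ] F)
        - ContinuousLinearMap.id ℝ F‖ = ‖rot v w v - v‖ := by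
  have hw : w ≠ 0 := by intro h; rw [h] at hD; simp at hD
  have hW : (0:ℝ) < ‖w‖^2 := pow_pos (norm_pos_iff.mpr hw) 2
  have happ : ∀ x : F, (((rot v w).toLinearIsometry.toContinuousLinearMap : F →L[ℝ] F)
      - ContinuousLinearMap.id ℝ F) x = rot v w x - x := by
    intro x; simp
  apply le_antisymm
  · apply ContinuousLinearMap.opNorm_le_bound _ (norm_nonneg _)
    intro x
    rw [happ]
    have hsq : ‖rot v w x - x‖^2 ≤ (‖rot v w v - v‖ * ‖x‖)^2 := by
      rw [mul_pow, norm_rot_sub_sq v w x hv hw, norm_rot_sub_sq v w v hv hw,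
        real_inner_self_eq_norm_sq, hv, real_inner_comm v w]
      have hg := gram_ineq v w x hv hD
      rw [div_mul_eq_mul_div, div_le_div_iff₀ hW hW]
      nlinarith [hg, hW]
    have h1 : 0 ≤ ‖rot v w v - v‖ * ‖x‖ := by positivity
    nlinarith [norm_nonneg (rot v w x - x), hsq, h1]
  · calc ‖rot v w v - v‖
        = ‖(((rot v w).toLinearIsometry.toContinuousLinearMap : F →L[ℝ] F)
            - ContinuousLinearMap.id ℝ F) v‖ := by rw [happ]
      _ ≤ _ := by
          apply ContinuousLinearMap.unit_le_opNorm
          rw [hv]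

lemma rot_det (v w : F) (hv : v ≠ 0) (hw : w ≠ 0) :
    LinearMap.det ((rot v w).toLinearEquiv : F →ₗ[ℝ] F) = 1 := by
  have h : ((rot v w).toLinearEquiv : F →ₗ[ℝ] F) =
      ((reflection (ℝ ∙ w)ᗮ).toLinearEquiv : F →ₗ[ℝ] F)
        ∘ₗ ((reflection (ℝ ∙ v)ᗮ).toLinearEquiv : F →ₗ[ℝ] F) := by
    ext x; rfl
  rw [h, LinearMap.det_comp]
  have hv1 : LinearMap.det ((reflection (ℝ ∙ v)ᗮ).toLinearEquiv : F →ₗ[ℝ] F) = -1 := by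
    rw [det_reflection, Submodule.orthogonal_orthogonal, finrank_span_singleton hv, pow_one]
  have hw1 : LinearMap.det ((reflection (ℝ ∙ w)ᗮ).toLinearEquiv : F →ₗ[ℝ] F) = -1 := by
    rw [det_reflection, Submodule.orthogonal_orthogonal, finrank_span_singleton hw, pow_one]
  rw [hv1, hw1]; norm_num

omit [FiniteDimensional ℝ F] in
lemma map_orth (O : F ≃ₗᵢ[ℝ] F) (v : F) :
    (Submodule.span ℝ {v})ᗮ.map (O.toLinearEquiv : F →ₗ[ℝ] F)
      = (Submodule.span ℝ {O v})ᗮ := by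
  ext x
  simp only [Submodule.mem_map, Submodule.mem_orthogonal_singleton_iff_inner_right]
  constructor
  · rintro ⟨y, hy, rfl⟩
    simpa [O.inner_map_map] using hy
  · intro hx
    refine ⟨O.symm x, ?_, by simp⟩
    have := O.inner_map_map v (O.symm x)
    simp only [LinearIsometryEquiv.apply_symm_apply] at this
    rw [this] at hx
    exact hx


/-- Given two codimension-1 subspaces σ, τ of ℝⁿ with unit normals v_σ, v_τ,
there is a rotation O ∈ SO(n) with O σ = τ, O v_σ = v_τ and ‖O − Id‖ = ‖v_σ − v_τ‖. -/
theorem stmt_1 (n : ℕ) (hn : 2 ≤ n)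
    (σ τ : Submodule ℝ (EuclideanSpace ℝ (Fin n)))
    (vσ vτ : EuclideanSpace ℝ (Fin n))
    (hvσ : ‖vσ‖ = 1) (hvτ : ‖vτ‖ = 1)
    (hσ : σ = (Submodule.span ℝ {vσ})ᗮ) (hτ : τ = (Submodule.span ℝ {vτ})ᗮ) :
    ∃ O : EuclideanSpace ℝ (Fin n) ≃ₗᵢ[ℝ] EuclideanSpace ℝ (Fin n),
      LinearMap.det (O.toLinearEquiv : EuclideanSpace ℝ (Fin n) →ₗ[ℝ] EuclideanSpace ℝ (Fin n)) = 1 ∧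
      σ.map (O.toLinearEquiv : EuclideanSpace ℝ (Fin n) →ₗ[ℝ] EuclideanSpace ℝ (Fin n)) = τ ∧
      O vσ = vτ ∧
      ‖(O.toLinearIsometry.toContinuousLinearMap :
          EuclideanSpace ℝ (Fin n) →L[ℝ] EuclideanSpace ℝ (Fin n))
        - ContinuousLinearMap.id ℝ (EuclideanSpace ℝ (Fin n))‖ = ‖vσ - vτ‖ := by
  subst hσ hτ
  have hvσ0 : vσ ≠ 0 := by intro h; rw [h] at hvσ; simp at hvσ
  have hvσσ : ⟪vσ, vσ⟫ = 1 := by rw [real_inner_self_eq_norm_sq, hvσ]; norm_num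
  by_cases h1 : vσ = vτ
  · subst h1
    refine ⟨LinearIsometryEquiv.refl ℝ _, ?_, ?_, ?_, ?_⟩
    · have h : (((LinearIsometryEquiv.refl ℝ (EuclideanSpace ℝ (Fin n))).toLinearEquiv :
          EuclideanSpace ℝ (Fin n) →ₗ[ℝ] EuclideanSpace ℝ (Fin n))) = LinearMap.id := rfl
      rw [h, LinearMap.det_id]
    · have h : (((LinearIsometryEquiv.refl ℝ (EuclideanSpace ℝ (Fin n))).toLinearEquiv :
          EuclideanSpace ℝ (Fin n) →ₗ[ℝ] EuclideanSpace ℝ (Fin n))) = LinearMap.id := rfl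
      rw [h, Submodule.map_id]
    · rfl
    · have hz : ((LinearIsometryEquiv.refl ℝ (EuclideanSpace ℝ (Fin n))).toLinearIsometry.toContinuousLinearMap :
          EuclideanSpace ℝ (Fin n) →L[ℝ] EuclideanSpace ℝ (Fin n))
          - ContinuousLinearMap.id ℝ (EuclideanSpace ℝ (Fin n)) = 0 := by
        ext x; simp
      rw [hz, sub_self, norm_zero, norm_zero]
  by_cases h2 : vτ = -vσ
  · obtain ⟨p, hpmem, hp0⟩ : ∃ p ∈ (Submodule.span ℝ {vσ})ᗮ, p ≠ 0 := by
      rw [← Submodule.ne_bot_iff]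
      intro hbot
      have htop := Submodule.orthogonal_eq_bot_iff.mp hbot
      have hfr : Module.finrank ℝ (EuclideanSpace ℝ (Fin n)) = 1 := by
        rw [← finrank_top ℝ (EuclideanSpace ℝ (Fin n)), ← htop, finrank_span_singleton hvσ0]
      rw [finrank_euclideanSpace_fin] at hfr
      omega
    have hvp : ⟪vσ, p⟫ = 0 := Submodule.mem_orthogonal_singleton_iff_inner_right.mp hpmem
    have hD : ⟪vσ, p⟫^2 < ‖p‖^2 := by
      rw [hvp]; simpa using pow_pos (norm_pos_iff.mpr hp0) 2
    have hOv : rot vσ p vσ = vτ := by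
      rw [rot_apply _ _ _ hvσ, hvσσ, real_inner_comm vσ p, hvp, h2]
      have h5 : ((2*(0:ℝ) - 4*1*0)/‖p‖^2) = 0 := by norm_num
      rw [h5]
      module
    refine ⟨rot vσ p, rot_det _ _ hvσ0 hp0, ?_, hOv, ?_⟩
    · rw [map_orth, hOv]
    · rw [key_norm _ _ hvσ hD, hOv, norm_sub_rev]
  · set c := ⟪vσ, vτ⟫ with hc
    have hvττ : ⟪vτ, vτ⟫ = 1 := by rw [real_inner_self_eq_norm_sq, hvτ]; norm_num
    have hsub : vσ - vτ ≠ 0 := sub_ne_zero.mpr h1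
    have hadd : vσ + vτ ≠ 0 := by
      intro h; exact h2 (by linear_combination (norm := module) h)
    have hclt : c < 1 := by
      have h3 := pow_pos (norm_pos_iff.mpr hsub) 2
      rw [norm_sub_sq_real, hvσ, hvτ] at h3
      nlinarith
    have hcgt : -1 < c := by
      have h3 := pow_pos (norm_pos_iff.mpr hadd) 2
      rw [norm_add_sq_real, hvσ, hvτ] at h3
      nlinarith
    have hwin : ⟪vσ, vσ + vτ⟫ = 1 + c := by rw [inner_add_right, hvσσ]
    have hW : ‖vσ + vτ‖^2 = 2 + 2*c := by rw [norm_add_sq_real, hvσ, hvτ]; ring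
    have hD : ⟪vσ, vσ + vτ⟫^2 < ‖vσ + vτ‖^2 := by rw [hwin, hW]; nlinarith
    have hOv : rot vσ (vσ + vτ) vσ = vτ := by
      have h4 : ⟪vσ + vτ, vσ⟫ = 1 + c := by
        rw [inner_add_left, hvσσ, real_inner_comm vσ vτ]
      rw [rot_apply _ _ _ hvσ, hvσσ, hwin, h4, hW]
      have hcoef : (2 * (1 + c) - 4 * 1 * (1 + c)) / (2 + 2*c) = -1 := by
        have : (2:ℝ) + 2*c ≠ 0 := by linarith
        have : (1:ℝ) + c ≠ 0 := by linarith
        field_simp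
        ring
      rw [hcoef]
      module
    refine ⟨rot vσ (vσ + vτ), rot_det _ _ hvσ0 hadd, ?_, hOv, ?_⟩
    · rw [map_orth, hOv]
    · rw [key_norm _ _ hvσ hD, hOv, norm_sub_rev]
end

section
/- For a codimension-1 subspace σ of ℝⁿ with unit normal v_σ satisfying v_σ ≠ ±e_n, set U_σ := (e_n − ⟨v_σ, e_n⟩ v_σ)/√(1 − ⟨v_σ, e_n⟩²) and u_σ := (⟨v_σ,e_n⟩ e_n − v_σ)/|⟨v_σ,e_n⟩ e_n − v_σ|. Then U_σ is a unit vector lying in σ ∩ span{v_σ, e_n}, u_σ is a unit vector lying in e_n^⊥ ∩ span{v_σ, e_n}, and for the rotation O_σ ∈ SO(n) which is the identity on σ ∩ e_n^⊥ and maps U_σ to u_σ (and v_σ to e_n), the following projection identity holds for all ξ ∈ ℝⁿ: O_σ Π_σ ξ = Π_{e_n^⊥} ξ + (⟨v_σ, e_n⟩ − 1)·⟨ξ, u_σ⟩·u_σ + ⟨ξ, e_n⟩·(⟨v_σ,e_n⟩ e_n − v_σ). -/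
open scoped RealInnerProductSpace

/-- The last standard basis vector e_n of ℝ^{n+1}. -/
noncomputable def eVec (n : ℕ) : EuclideanSpace ℝ (Fin (n + 1)) :=
  EuclideanSpace.single (Fin.last n) (1 : ℝ)

set_option maxHeartbeats 1000000 in
/-- with U_σ, u_σ the distinguished unit vectors in σ ∩ span{v_σ,e_n}
and e_n^⊥ ∩ span{v_σ,e_n}, and O_σ the rotation fixing σ ∩ e_n^⊥ with O_σ U_σ = u_σ,
O_σ v_σ = e_n, one has O_σ Π_σ ξ = Π_{e_n^⊥} ξ + (⟨v_σ,e_n⟩−1)⟨ξ,u_σ⟩u_σ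
+ ⟨ξ,e_n⟩(⟨v_σ,e_n⟩e_n − v_σ). -/
theorem stmt_4 (n : ℕ) (hn : 1 ≤ n)
    (vσ : EuclideanSpace ℝ (Fin (n + 1))) (hvσ : ‖vσ‖ = 1)
    (hne : vσ ≠ eVec n) (hne' : vσ ≠ -eVec n)
    (σ : Submodule ℝ (EuclideanSpace ℝ (Fin (n + 1))))
    (hσ : σ = (Submodule.span ℝ {vσ})ᗮ)
    (Uσ uσ : EuclideanSpace ℝ (Fin (n + 1)))
    (hU : Uσ = (Real.sqrt (1 - ⟪vσ, eVec n⟫ ^ 2))⁻¹ • (eVec n - ⟪vσ, eVec n⟫ • vσ))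
    (hu : uσ = ‖⟪vσ, eVec n⟫ • eVec n - vσ‖⁻¹ • (⟪vσ, eVec n⟫ • eVec n - vσ))
    (O : EuclideanSpace ℝ (Fin (n + 1)) ≃ₗᵢ[ℝ] EuclideanSpace ℝ (Fin (n + 1)))
    (hfix : ∀ w ∈ σ ⊓ (Submodule.span ℝ {eVec n})ᗮ, O w = w)
    (hOU : O Uσ = uσ) (hOv : O vσ = eVec n) :
    ‖Uσ‖ = 1 ∧ Uσ ∈ σ ⊓ Submodule.span ℝ {vσ, eVec n} ∧
    ‖uσ‖ = 1 ∧ uσ ∈ (Submodule.span ℝ {eVec n})ᗮ ⊓ Submodule.span ℝ {vσ, eVec n} ∧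
    ∀ ξ : EuclideanSpace ℝ (Fin (n + 1)),
      O (Submodule.orthogonalProjectionOnto σ ξ : EuclideanSpace ℝ (Fin (n + 1)))
        = (Submodule.orthogonalProjectionOnto ((Submodule.span ℝ {eVec n})ᗮ) ξ :
            EuclideanSpace ℝ (Fin (n + 1)))
          + (⟪vσ, eVec n⟫ - 1) • (⟪ξ, uσ⟫ • uσ)
          + ⟪ξ, eVec n⟫ • (⟪vσ, eVec n⟫ • eVec n - vσ) := by
  have he : ‖eVec n‖ = 1 := by
    simp [eVec, EuclideanSpace.norm_single]
  set e : EuclideanSpace ℝ (Fin (n + 1)) := eVec n with he_def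
  clear_value e
  obtain ⟨c, hc⟩ : ∃ x : ℝ, ⟪vσ, e⟫ = x := ⟨_, rfl⟩
  rw [hc] at hU hu ⊢
  have hc1 : c < 1 := by
    rcases lt_or_eq_of_le (real_inner_le_norm vσ e) with h | h
    · rw [hvσ, he, one_mul, hc] at h; exact h
    · exfalso
      refine hne ((inner_eq_one_iff_of_norm_eq_one (𝕜 := ℝ) hvσ he).1 ?_)
      rw [h, hvσ, he]; ring
  have hc2 : -1 < c := by
    have he' : ‖(-e : EuclideanSpace ℝ (Fin (n + 1)))‖ = 1 := by rw [norm_neg]; exact he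
    rcases lt_or_eq_of_le (real_inner_le_norm vσ (-e)) with h | h
    · rw [hvσ, he', one_mul, inner_neg_right, hc] at h
      linarith
    · exfalso
      refine hne' ((inner_eq_one_iff_of_norm_eq_one (𝕜 := ℝ) hvσ he').1 ?_)
      rw [h, hvσ, he']; ring
  have hs2 : (0:ℝ) < 1 - c ^ 2 := by nlinarith
  obtain ⟨s, hs_eq⟩ : ∃ x : ℝ, Real.sqrt (1 - c ^ 2) = x := ⟨_, rfl⟩
  rw [hs_eq] at hU
  have hs : 0 < s := hs_eq ▸ Real.sqrt_pos.2 hs2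
  have hs0 : s ≠ 0 := ne_of_gt hs
  have hss : s ^ 2 = 1 - c ^ 2 := by rw [← hs_eq]; exact Real.sq_sqrt hs2.le
  have hEV : ⟪e, vσ⟫ = c := by rw [real_inner_comm vσ e, hc]
  have hvv : ⟪vσ, vσ⟫ = 1 := by
    rw [real_inner_self_eq_norm_sq, hvσ]; norm_num
  have hee : ⟪e, e⟫ = 1 := by
    rw [real_inner_self_eq_norm_sq, he]; norm_num
  have hcc : (1:ℝ) - c * c = s * s := by nlinarith [hss]
  have hinv : s * s⁻¹ = 1 := mul_inv_cancel₀ hs0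
  -- norms of the two auxiliary vectors
  have hn1 : ‖e - c • vσ‖ = s := by
    have h2 : ‖e - c • vσ‖ ^ 2 = s ^ 2 := by
      rw [← real_inner_self_eq_norm_sq, hss]
      simp only [inner_sub_left, inner_sub_right, real_inner_smul_left, real_inner_smul_right,
        hvv, hee, hEV, hc]
      ring
    rw [← Real.sqrt_sq (norm_nonneg (e - c • vσ)), h2, Real.sqrt_sq hs.le]
  have hn2 : ‖c • e - vσ‖ = s := by
    have h2 : ‖c • e - vσ‖ ^ 2 = s ^ 2 := by
      rw [← real_inner_self_eq_norm_sq, hss]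
      simp only [inner_sub_left, inner_sub_right, real_inner_smul_left, real_inner_smul_right,
        hvv, hee, hEV, hc]
      ring
    rw [← Real.sqrt_sq (norm_nonneg (c • e - vσ)), h2, Real.sqrt_sq hs.le]
  have hu' : uσ = s⁻¹ • (c • e - vσ) := by rw [hu, hn2]
  have hUnorm : ‖Uσ‖ = 1 := by
    rw [hU, norm_smul, hn1, norm_inv, Real.norm_eq_abs, abs_of_pos hs, inv_mul_cancel₀ hs0]
  have hunorm : ‖uσ‖ = 1 := by
    rw [hu', norm_smul, hn2, norm_inv, Real.norm_eq_abs, abs_of_pos hs, inv_mul_cancel₀ hs0]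
  -- basic inner products
  have hvU : ⟪vσ, Uσ⟫ = 0 := by
    rw [hU]
    simp only [real_inner_smul_right, inner_sub_right, real_inner_smul_right, hvv, hc]
    ring
  have hUe : ⟪Uσ, e⟫ = s := by
    rw [hU]
    simp only [real_inner_smul_left, inner_sub_left, real_inner_smul_left, hee, hEV, hc]
    rw [hcc]
    field_simp
  have heu : ⟪e, uσ⟫ = 0 := by
    rw [hu']
    simp only [real_inner_smul_right, inner_sub_right, real_inner_smul_right, hee, hEV, hc]
    ring
  have hvu : ⟪vσ, uσ⟫ = -s := by
    rw [hu']
    simp only [real_inner_smul_right, inner_sub_right, real_inner_smul_right, hvv, hEV, hc]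
    rw [inv_mul_eq_iff_eq_mul₀ hs0]
    nlinarith [hss]
  have hUu : ⟪Uσ, uσ⟫ = c := by
    rw [hU, hu']
    simp only [real_inner_smul_left, real_inner_smul_right, inner_sub_left, inner_sub_right,
      hvv, hee, hEV, hc]
    field_simp
    first
    | linear_combination (-c) * hss
    | exact Or.inl hcc
    | (left; nlinarith [hss])
    | nlinarith [hss]
  -- memberships
  have hUmem : Uσ ∈ σ ⊓ Submodule.span ℝ {vσ, e} := by
    refine Submodule.mem_inf.2 ⟨?_, ?_⟩
    · rw [hσ]
      exact Submodule.mem_orthogonal_singleton_iff_inner_right.2 hvU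
    · rw [Submodule.mem_span_pair]
      exact ⟨-(s⁻¹ * c), s⁻¹, by rw [hU, smul_sub, smul_smul]; module⟩
  have humem : uσ ∈ (Submodule.span ℝ {e})ᗮ ⊓ Submodule.span ℝ {vσ, e} := by
    refine Submodule.mem_inf.2 ⟨?_, ?_⟩
    · exact Submodule.mem_orthogonal_singleton_iff_inner_right.2 heu
    · rw [Submodule.mem_span_pair]
      exact ⟨-s⁻¹, s⁻¹ * c, by rw [hu', smul_sub, smul_smul]; module⟩
  refine ⟨hUnorm, hUmem, hunorm, humem, ?_⟩
  -- the projection identity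
  intro ξ
  obtain ⟨a, ha⟩ : ∃ x : ℝ, ⟪ξ, vσ⟫ = x := ⟨_, rfl⟩
  obtain ⟨b, hb⟩ : ∃ x : ℝ, ⟪ξ, Uσ⟫ = x := ⟨_, rfl⟩
  set w : EuclideanSpace ℝ (Fin (n + 1)) := ξ - a • vσ - b • Uσ with hw_def
  clear_value w
  have hUU : ⟪Uσ, Uσ⟫ = 1 := by
    rw [real_inner_self_eq_norm_sq, hUnorm]; norm_num
  have hwv : ⟪vσ, w⟫ = 0 := by
    rw [hw_def]
    simp only [inner_sub_right, real_inner_smul_right, hvv, hvU]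
    rw [real_inner_comm ξ vσ, ha]
    ring
  have hwU : ⟪Uσ, w⟫ = 0 := by
    rw [hw_def]
    simp only [inner_sub_right, real_inner_smul_right, hUU]
    rw [real_inner_comm ξ Uσ, hb, real_inner_comm vσ Uσ, hvU]
    ring
  have heq : e = c • vσ + s • Uσ := by
    rw [hU, smul_inv_smul₀ hs0]
    abel
  have hwe : ⟪e, w⟫ = 0 := by
    rw [heq]
    simp only [inner_add_left, real_inner_smul_left, hwv, hwU]
    ring
  have huvec : uσ = c • Uσ - s • vσ := by
    rw [hu', heq]
    rw [smul_sub, smul_add, smul_smul, smul_smul]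
    match_scalars
    · linear_combination s⁻¹ * hss - s * hinv
    · linear_combination c * hinv
  have hwmem : w ∈ σ ⊓ (Submodule.span ℝ {e})ᗮ :=
    Submodule.mem_inf.2 ⟨hσ ▸ Submodule.mem_orthogonal_singleton_iff_inner_right.2 hwv,
      Submodule.mem_orthogonal_singleton_iff_inner_right.2 hwe⟩
  -- projections
  have hP : (Submodule.orthogonalProjectionOnto σ ξ : EuclideanSpace ℝ (Fin (n + 1))) = ξ - a • vσ := by
    rw [← Submodule.starProjection_apply, hσ, Submodule.starProjection_orthogonal_val,
      Submodule.starProjection_unit_singleton ℝ hvσ, real_inner_comm ξ vσ, ha]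
  have hQ : (Submodule.orthogonalProjectionOnto ((Submodule.span ℝ {e})ᗮ) ξ :
      EuclideanSpace ℝ (Fin (n + 1))) = ξ - ⟪ξ, e⟫ • e := by
    rw [← Submodule.starProjection_apply, Submodule.starProjection_orthogonal_val,
      Submodule.starProjection_unit_singleton ℝ he, real_inner_comm ξ e]
  have hxi : ξ = w + a • vσ + b • Uσ := by rw [hw_def]; abel
  have hLHS : O (Submodule.orthogonalProjectionOnto σ ξ : EuclideanSpace ℝ (Fin (n + 1))) = w + b • uσ := by
    rw [hP]
    have h9 : ξ - a • vσ = w + b • Uσ := by rw [hw_def]; abel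
    rw [h9, map_add, map_smul, hOU, hfix w hwmem]
  have hxe : ⟪ξ, e⟫ = a * c + b * s := by
    conv_lhs => rw [hxi]
    simp only [inner_add_left, real_inner_smul_left]
    rw [real_inner_comm e w, hwe, hc, hUe]
    ring
  have hxu : ⟪ξ, uσ⟫ = -(a * s) + b * c := by
    conv_lhs => rw [hxi]
    simp only [inner_add_left]
    rw [real_inner_comm uσ w]
    rw [show ⟪uσ, w⟫ = 0 from by
      rw [huvec]; simp only [inner_sub_left, real_inner_smul_left, hwU, hwv]; ring]
    simp only [real_inner_smul_left, hvu, hUu]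
    ring
  rw [hLHS, hQ, hxe, hxu]
  conv_rhs => rw [hxi]
  rw [hU, huvec, hU]
  match_scalars
  · ring
  · linear_combination (-(s⁻¹ * (c - 1) * b)) * hss + ((a * c + b * s) * (c - 1)) * hinv
  · linear_combination (a - a * c - s⁻¹ * (1 - c) * c * b) * hss + c * (1 - c) * (a * c + b * s) * hinv
end
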